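/- Let F be a field, K a finite Galois extension of F of degree d with cyclic Galois group generated by α, and L = K × ... × K the product of n copies of K, viewed as an F-algebra. Let σ be the F-algebra automorphism of L defined by σ(k_1, ..., k_n) = (α(k_n), k_1, ..., k_{n-1}), and let G be the subgroup of Aut_F(L) generated by σ. Then G is a cyclic group of order dn and L^G = F (the fixed subalgebra of L under G is the diagonal copy of F). -/

import Mathlib

open Fin.NatCast

private lemma fix_zpow {R A : Type*} [CommSemiring R] [Semiring A] [Algebra R A]
    (β : A ≃ₐ[R] A) {c : A} (h : β c = c) : ∀ m : ℤ, (β ^ m) c = c := by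
  have hn : ∀ k : ℕ, (β ^ k) c = c := by
    intro k
    induction k with
    | zero => rfl
    | succ k ih => rw [pow_succ']; show β ((β ^ k) c) = c; rw [ih, h]
  intro m
  cases m with
  | ofNat k => simpa using hn k
  | negSucc k =>
      rw [zpow_negSucc]
      apply (β ^ (k + 1)).injective
      show (β ^ (k + 1)) (((β ^ (k + 1))⁻¹ : _) c) = (β ^ (k + 1)) c
      rw [hn (k + 1)]
      exact (β ^ (k + 1)).apply_symm_apply c

/-- Remark 2 (1): For a cyclic Galois extension `K/F` of degree `d` with Galois group
generated by `α`, the `F`-algebra automorphism `σ` of `L = K × ⋯ × K` (`n` copies) given by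
`σ(k₁, …, kₙ) = (α(kₙ), k₁, …, k_{n-1})` generates a cyclic group `G` of order `d * n`, and
the fixed subalgebra `L^G` is the diagonal copy of `F`. -/
theorem remark_cyclic_galois_algebra
    (F K : Type*) [Field F] [Field K] [Algebra F K] [IsGalois F K] [FiniteDimensional F K]
    (d n : ℕ) [NeZero n] (hd : Module.finrank F K = d)
    (α : K ≃ₐ[F] K) (hα : ∀ g : K ≃ₐ[F] K, ∃ m : ℤ, g = α ^ m)
    (σ : (Fin n → K) ≃ₐ[F] (Fin n → K))
    (hσ : ∀ (x : Fin n → K) (i : Fin n),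
      σ x i = if i = 0 then α (x (i - 1)) else x (i - 1)) :
    IsCyclic (Subgroup.zpowers σ) ∧
    Nat.card (Subgroup.zpowers σ) = d * n ∧
    ∀ x : Fin n → K,
      (∀ g ∈ Subgroup.zpowers σ, g x = x) ↔ ∃ t : F, x = fun _ => algebraMap F K t := by
  obtain ⟨p, rfl⟩ : ∃ p, n = p + 1 :=
    ⟨n - 1, (Nat.succ_pred_eq_of_pos (Nat.pos_of_ne_zero (NeZero.ne n))).symm⟩
  -- `orderOf α = d`
  have hzα : Subgroup.zpowers α = ⊤ := by
    rw [Subgroup.eq_top_iff']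
    intro g
    obtain ⟨m, rfl⟩ := hα g
    exact Subgroup.zpow_mem_zpowers α m
  have hcard : Nat.card (K ≃ₐ[F] K) = d := by
    rw [IsGalois.card_aut_eq_finrank, hd]
  have hordα : orderOf α = d := by
    rw [← Nat.card_zpowers, hzα, ← hcard]
    exact Nat.card_congr Subgroup.topEquiv.toEquiv
  have hd0 : 0 < d := by
    rw [← hd]; exact Module.finrank_pos
  have hαd : α ^ d = 1 := by rw [← hordα]; exact pow_orderOf_eq_one α
  -- power formula for `σ ^ k`, `k ≤ p + 1`
  have hpowle : ∀ k, k ≤ p + 1 → ∀ (x : Fin (p + 1) → K) (i : Fin (p + 1)),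
      (σ ^ k) x i = if (i : ℕ) < k then α (x (i - (k : Fin (p + 1))))
        else x (i - (k : Fin (p + 1))) := by
    intro k hk
    induction k with
    | zero => intro x i; simp
    | succ k ih =>
        intro x i
        have hk' : k ≤ p + 1 := Nat.le_of_succ_le hk
        rw [pow_succ']
        show σ ((σ ^ k) x) i = _
        rw [hσ]
        have hcast : ((k + 1 : ℕ) : Fin (p + 1)) = (k : Fin (p + 1)) + 1 := by
          push_cast; ring
        by_cases hi : i = 0
        · subst hi
          rw [if_pos rfl, ih hk' x]
          have hval : ((0 - 1 : Fin (p + 1)) : ℕ) = p := by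
            have := Fin.coe_sub_one (0 : Fin (p + 1))
            simpa using this
          have hlt : ¬ ((0 - 1 : Fin (p + 1)) : ℕ) < k := by
            rw [hval]; omega
          rw [if_neg hlt, if_pos (by simp)]
          congr 1
          rw [hcast, sub_sub]
          abel
        · rw [if_neg hi, ih hk' x]
          have hval : ((i - 1 : Fin (p + 1)) : ℕ) = (i : ℕ) - 1 := by
            have := Fin.coe_sub_one i
            rw [if_neg hi] at this
            exact this
          have hiv : 1 ≤ (i : ℕ) := by
            rcases Nat.eq_zero_or_pos (i : ℕ) with h0 | h1
            · exact absurd (Fin.ext h0) hi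
            · exact h1
          have hiff : ((i - 1 : Fin (p + 1)) : ℕ) < k ↔ (i : ℕ) < k + 1 := by
            rw [hval]; omega
          have hsub : i - 1 - (k : Fin (p + 1)) = i - ((k + 1 : ℕ) : Fin (p + 1)) := by
            rw [hcast, sub_sub]; abel
          by_cases hlt : ((i - 1 : Fin (p + 1)) : ℕ) < k
          · rw [if_pos hlt, if_pos (hiff.mp hlt), hsub]
          · rw [if_neg hlt, if_neg (fun h => hlt (hiff.mpr h)), hsub]
  -- `σ ^ (p+1)` applies `α` coordinatewise
  have hpown : ∀ (x : Fin (p + 1) → K) (i : Fin (p + 1)), (σ ^ (p + 1)) x i = α (x i) := by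
    intro x i
    rw [hpowle (p + 1) le_rfl x i, if_pos i.isLt]
    congr 2
    simp
  -- `σ ^ ((p+1) * m)` applies `α ^ m` coordinatewise
  have hpownm : ∀ (m : ℕ) (x : Fin (p + 1) → K) (i : Fin (p + 1)),
      (σ ^ ((p + 1) * m)) x i = (α ^ m) (x i) := by
    intro m
    induction m with
    | zero => intro x i; simp
    | succ m ih =>
        intro x i
        have he : (p + 1) * (m + 1) = (p + 1) * m + (p + 1) := by ring
        rw [he, pow_add]
        show (σ ^ ((p + 1) * m)) ((σ ^ (p + 1)) x) i = _
        rw [ih, hpown, pow_succ]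
        rfl
  -- general shift formula (up to powers of α)
  have hshift : ∀ (k : ℕ) (x : Fin (p + 1) → K) (i : Fin (p + 1)),
      ∃ w : ℕ, (σ ^ k) x i = (α ^ w) (x (i - (k : Fin (p + 1)))) := by
    intro k
    induction k with
    | zero => intro x i; exact ⟨0, by simp⟩
    | succ k ih =>
        intro x i
        rw [pow_succ']
        show ∃ w, σ ((σ ^ k) x) i = _
        have hcast : ((k + 1 : ℕ) : Fin (p + 1)) = (k : Fin (p + 1)) + 1 := by
          push_cast; ring
        have hsub : i - 1 - (k : Fin (p + 1)) = i - ((k + 1 : ℕ) : Fin (p + 1)) := by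
          rw [hcast, sub_sub]; abel
        rw [hσ]
        by_cases hi : i = 0
        · obtain ⟨w, hw⟩ := ih x (i - 1)
          exact ⟨w + 1, by rw [if_pos hi, hw, hsub, pow_succ']; rfl⟩
        · obtain ⟨w, hw⟩ := ih x (i - 1)
          exact ⟨w, by rw [if_neg hi, hw, hsub]⟩
  -- order of σ
  have hσdn : σ ^ (d * (p + 1)) = 1 := by
    have hcomm : σ ^ (d * (p + 1)) = σ ^ ((p + 1) * d) := by rw [mul_comm]
    apply AlgEquiv.ext
    intro x
    funext i
    rw [hcomm]
    show (σ ^ ((p + 1) * d)) x i = (1 : (Fin (p + 1) → K) ≃ₐ[F] (Fin (p + 1) → K)) x i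
    rw [hpownm d x i, hαd]
    rfl
  have horddvd : orderOf σ ∣ d * (p + 1) := orderOf_dvd_of_pow_eq_one hσdn
  have hordσ : orderOf σ = d * (p + 1) := by
    refine Nat.dvd_antisymm horddvd ?_
    have hσr : σ ^ orderOf σ = 1 := pow_orderOf_eq_one σ
    -- (p+1) ∣ orderOf σ
    have hnr : (p + 1) ∣ orderOf σ := by
      classical
      set x : Fin (p + 1) → K := fun j => if j = 0 then 1 else 0 with hx
      have hfix : (σ ^ orderOf σ) x = x := by rw [hσr]; rfl
      obtain ⟨w, hw⟩ := hshift (orderOf σ) x ((orderOf σ : ℕ) : Fin (p + 1))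
      rw [hfix] at hw
      rw [sub_self] at hw
      simp only [hx, if_pos rfl] at hw
      rw [map_one] at hw
      by_contra hnd
      rw [if_neg (fun h => hnd (Fin.natCast_eq_zero.mp h))] at hw
      exact one_ne_zero hw.symm
    obtain ⟨m, hm⟩ := hnr
    -- d ∣ m
    have hαm : α ^ m = 1 := by
      apply AlgEquiv.ext
      intro c
      have h1 : (σ ^ ((p + 1) * m)) (fun _ => c) = (fun _ => c) := by
        rw [← hm, hσr]; rfl
      have h0 := congrFun h1 0
      rw [hpownm m (fun _ => c) 0] at h0
      exact h0
    have hdm : d ∣ m := hordα ▸ orderOf_dvd_of_pow_eq_one hαm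
    obtain ⟨e, he⟩ := hdm
    exact ⟨e, by rw [hm, he]; ring⟩
  have hcyc : IsCyclic (Subgroup.zpowers σ) := by
    refine ⟨⟨⟨σ, Subgroup.mem_zpowers σ⟩, ?_⟩⟩
    rintro ⟨x, hx⟩
    obtain ⟨m, hm⟩ := Subgroup.mem_zpowers_iff.mp hx
    exact Subgroup.mem_zpowers_iff.mpr ⟨m, Subtype.ext (by push_cast; exact hm)⟩
  refine ⟨hcyc, ?_, ?_⟩
  · rw [Nat.card_zpowers, hordσ]
  · intro x
    constructor
    · intro hfix
      have hσx : σ x = x := hfix σ (Subgroup.mem_zpowers σ)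
      -- x is constant
      have hconst : ∀ i : Fin (p + 1), x i = x 0 := by
        have key : ∀ j : ℕ, ∀ h : j < p + 1, x ⟨j, h⟩ = x 0 := by
          intro j
          induction j with
          | zero => intro h; rfl
          | succ j ih =>
              intro h
              have hne : (⟨j + 1, h⟩ : Fin (p + 1)) ≠ 0 := by
                intro hc
                exact absurd (congrArg Fin.val hc) (by simp)
              have hth := congrFun hσx ⟨j + 1, h⟩
              rw [hσ, if_neg hne] at hth
              have hsub : (⟨j + 1, h⟩ : Fin (p + 1)) - 1 = ⟨j, by omega⟩ := by
                apply Fin.ext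
                rw [Fin.coe_sub_one, if_neg hne]
                simp
              rw [hsub] at hth
              rw [← hth, ih (by omega)]
        intro i
        have := key i.val i.isLt
        simpa using this
      -- `α` fixes `x 0`
      have hα0 : α (x 0) = x 0 := by
        have hth := congrFun hσx 0
        rw [hσ, if_pos rfl, hconst (0 - 1)] at hth
        exact hth
      have hall : ∀ g : K ≃ₐ[F] K, g (x 0) = x 0 := by
        intro g
        obtain ⟨m, rfl⟩ := hα g
        exact fix_zpow α hα0 m
      have hbot : x 0 ∈ (⊥ : IntermediateField F K) := by
        have h := (IsGalois.tfae (F := F) (E := K)).out 0 1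
        rw [← h.mp inferInstance]
        exact fun g => hall g
      obtain ⟨t, ht⟩ := IntermediateField.mem_bot.mp hbot
      exact ⟨t, by funext i; rw [hconst i, ← ht]⟩
    · rintro ⟨t, rfl⟩
      intro g hg
      obtain ⟨m, rfl⟩ := Subgroup.mem_zpowers_iff.mp hg
      apply fix_zpow
      funext i
      rw [hσ]
      split
      · exact α.commutes t
      · rfl
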